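/- (Unreachability of λ = 0.8 for LinOSS-IM and LinOSS-IMEX.) For all real A ≥ 0 and Δt ∈ (0,1], neither λ^IM+(A,Δt) nor λ^IM−(A,Δt) equals the real number 0.8 (viewed in ℂ); and for all real A ≥ 0 and Δt ∈ (0,1] with Δt²·A ≤ 4, neither λ^IMEX+(A,Δt) nor λ^IMEX−(A,Δt) equals 0.8. -/
import Mathlib


/-- The LinOSS-IM per-component eigenvalues (`s = 1` for `+`, `s = -1` for `−`). -/
noncomputable def lamIM (A Δt : ℝ) (s : ℝ) : ℂ :=
  ((1 / (1 + Δt ^ 2 * A) : ℝ) : ℂ) +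
    (s : ℂ) * Complex.I * ((Δt * Real.sqrt A / (1 + Δt ^ 2 * A) : ℝ) : ℂ)

/-- The LinOSS-IMEX per-component eigenvalues (`s = 1` for `+`, `s = -1` for `−`). -/
noncomputable def lamIMEX (A Δt : ℝ) (s : ℝ) : ℂ :=
  (((2 - Δt ^ 2 * A) / 2 : ℝ) : ℂ) +
    (s : ℂ) * (Complex.I / 2) * ((Real.sqrt (Δt ^ 2 * A * (4 - Δt ^ 2 * A)) : ℝ) : ℂ)

lemma lamIM_re (A Δt s : ℝ) : (lamIM A Δt s).re = 1 / (1 + Δt ^ 2 * A) := by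
  simp only [lamIM, Complex.add_re, Complex.mul_re, Complex.mul_im,
    Complex.I_re, Complex.I_im, Complex.ofReal_re, Complex.ofReal_im]; ring

lemma lamIM_im (A Δt s : ℝ) :
    (lamIM A Δt s).im = s * (Δt * Real.sqrt A / (1 + Δt ^ 2 * A)) := by
  simp only [lamIM, Complex.add_im, Complex.mul_re, Complex.mul_im,
    Complex.I_re, Complex.I_im, Complex.ofReal_re, Complex.ofReal_im]; ring

lemma lamIMEX_re (A Δt s : ℝ) : (lamIMEX A Δt s).re = (2 - Δt ^ 2 * A) / 2 := by
  simp only [lamIMEX, Complex.add_re, Complex.mul_re, Complex.mul_im, Complex.div_ofNat_re,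
    Complex.div_ofNat_im, Complex.I_re, Complex.I_im, Complex.ofReal_re, Complex.ofReal_im]; ring

lemma lamIMEX_im (A Δt s : ℝ) :
    (lamIMEX A Δt s).im = s / 2 * Real.sqrt (Δt ^ 2 * A * (4 - Δt ^ 2 * A)) := by
  simp only [lamIMEX, Complex.add_im, Complex.mul_re, Complex.mul_im, Complex.div_ofNat_re,
    Complex.div_ofNat_im, Complex.I_re, Complex.I_im, Complex.ofReal_re, Complex.ofReal_im]; ring

lemma lamIM_ne (A Δt s : ℝ) (hA : 0 ≤ A) (hΔt : Δt ∈ Set.Ioc (0 : ℝ) 1)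
    (hs : s ≠ 0) : lamIM A Δt s ≠ ((0.8 : ℝ) : ℂ) := by
  intro h
  have hre : (lamIM A Δt s).re = 0.8 := by rw [h]; simp
  have him : (lamIM A Δt s).im = 0 := by rw [h]; simp
  rw [lamIM_im] at him
  rw [lamIM_re] at hre
  have hden : (0:ℝ) < 1 + Δt ^ 2 * A := by positivity
  have h1 : Δt * Real.sqrt A / (1 + Δt ^ 2 * A) = 0 := by
    rcases mul_eq_zero.1 him with h | h
    · exact absurd h hs
    · exact h
  have h2 : Real.sqrt A = 0 := by
    have := (div_eq_zero_iff.1 h1).resolve_right (ne_of_gt hden)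
    rcases mul_eq_zero.1 this with h | h
    · exact absurd h (ne_of_gt hΔt.1)
    · exact h
  have hA0 : A = 0 := (Real.sqrt_eq_zero hA).1 h2
  rw [hA0] at hre
  norm_num at hre

lemma lamIMEX_ne (A Δt s : ℝ) (hA : 0 ≤ A) (hΔt : Δt ∈ Set.Ioc (0 : ℝ) 1)
    (h4 : Δt ^ 2 * A ≤ 4) (hs : s ≠ 0) : lamIMEX A Δt s ≠ ((0.8 : ℝ) : ℂ) := by
  intro h
  have hre : (lamIMEX A Δt s).re = 0.8 := by rw [h]; simp
  have him : (lamIMEX A Δt s).im = 0 := by rw [h]; simp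
  rw [lamIMEX_re] at hre
  rw [lamIMEX_im] at him
  have hx : Δt ^ 2 * A = 0.4 := by linarith
  have hsq : Real.sqrt (Δt ^ 2 * A * (4 - Δt ^ 2 * A)) = 0 := by
    rcases mul_eq_zero.1 him with h | h
    · exact absurd h (div_ne_zero hs two_ne_zero)
    · exact h
  rw [hx] at hsq
  have h12 : ((0.4:ℝ) * (4 - 0.4)) ≤ 0 := Real.sqrt_eq_zero'.1 hsq
  norm_num at h12

theorem linoss_unreachable_eigenvalue :
    (∀ A Δt : ℝ, 0 ≤ A → Δt ∈ Set.Ioc (0 : ℝ) 1 →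
      lamIM A Δt 1 ≠ ((0.8 : ℝ) : ℂ) ∧ lamIM A Δt (-1) ≠ ((0.8 : ℝ) : ℂ)) ∧
    (∀ A Δt : ℝ, 0 ≤ A → Δt ∈ Set.Ioc (0 : ℝ) 1 → Δt ^ 2 * A ≤ 4 →
      lamIMEX A Δt 1 ≠ ((0.8 : ℝ) : ℂ) ∧ lamIMEX A Δt (-1) ≠ ((0.8 : ℝ) : ℂ)) := by
  constructor
  · exact fun A Δt hA hΔt =>
      ⟨lamIM_ne A Δt 1 hA hΔt one_ne_zero, lamIM_ne A Δt (-1) hA hΔt (by norm_num)⟩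
  · exact fun A Δt hA hΔt h4 =>
      ⟨lamIMEX_ne A Δt 1 hA hΔt h4 one_ne_zero,
       lamIMEX_ne A Δt (-1) hA hΔt h4 (by norm_num)⟩
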